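/- Let ‖·‖ be a norm on ℝ^d, let f : ℝ^d → ℝ be Lipschitz with respect to ‖·‖, and suppose f is subdifferentiable at w ∈ ℝ^d. Then the regular subdifferential satisfies ∂f(w) = {g ∈ ℝ^d : ⟨g, e⟩ ≤ f′(w; e) for all e ∈ ℝ^d}, where f′(w; e) = liminf_{ε → 0⁺, c → e} (f(w + εc) − f(w))/ε is the lower directional derivative of f at w in direction e. -/

import Mathlib

open Set Filter

/-- `Nm` is a norm on `ℝ^d`. -/
def IsNorm {d : ℕ} (Nm : EuclideanSpace ℝ (Fin d) → ℝ) : Prop :=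
  (∀ x, Nm x = 0 ↔ x = 0) ∧ (∀ (a : ℝ) (x), Nm (a • x) = |a| * Nm x) ∧
    ∀ x y, Nm (x + y) ≤ Nm x + Nm y

lemma isnorm_nonneg {d : ℕ} {Nm : EuclideanSpace ℝ (Fin d) → ℝ} (hNm : IsNorm Nm) (x) :
    0 ≤ Nm x := by
  have h0 : Nm 0 = 0 := (hNm.1 0).mpr rfl
  have hneg : Nm (-x) = Nm x := by
    have := hNm.2.1 (-1) x
    simpa using this
  have := hNm.2.2 x (-x)
  simp only [add_neg_cancel, h0, hneg] at this
  linarith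

lemma isnorm_sum {d : ℕ} {Nm : EuclideanSpace ℝ (Fin d) → ℝ} (hNm : IsNorm Nm)
    {ι : Type*} (s : Finset ι) (g : ι → EuclideanSpace ℝ (Fin d)) :
    Nm (∑ i ∈ s, g i) ≤ ∑ i ∈ s, Nm (g i) := by
  classical
  induction s using Finset.induction_on with
  | empty => simp [(hNm.1 0).mpr rfl]
  | insert _ _ hi ih =>
    rw [Finset.sum_insert hi, Finset.sum_insert hi]
    exact (hNm.2.2 _ _).trans (by linarith)

lemma coord_le_norm {d : ℕ} (x : EuclideanSpace ℝ (Fin d)) (i : Fin d) : |x i| ≤ ‖x‖ := by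
  have h := EuclideanSpace.norm_eq x
  have h2 : |x i| = Real.sqrt ((x i)^2) := by rw [Real.sqrt_sq_eq_abs]
  rw [h2, h]
  apply Real.sqrt_le_sqrt
  exact Finset.single_le_sum (f := fun j => ‖x j‖^2) (fun j _ => by positivity)
    (Finset.mem_univ i) |>.trans_eq' (by rw [Real.norm_eq_abs, sq_abs])

lemma decomp {d : ℕ} (x : EuclideanSpace ℝ (Fin d)) :
    x = ∑ i, (x i) • EuclideanSpace.single i (1:ℝ) := by
  ext j
  rw [WithLp.ofLp_sum, Finset.sum_apply]
  simp [EuclideanSpace.single_apply]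

lemma unit_norm {d : ℕ} {x : EuclideanSpace ℝ (Fin d)} (hx : x ≠ 0) : ‖‖x‖⁻¹ • x‖ = 1 := by
  rw [norm_smul, norm_inv, norm_norm]
  exact inv_mul_cancel₀ (norm_ne_zero_iff.mpr hx)

set_option maxRecDepth 4000 in
lemma norm_equiv {d : ℕ} {Nm : EuclideanSpace ℝ (Fin d) → ℝ} (hNm : IsNorm Nm) :
    ∃ m M : ℝ, 0 < m ∧ 0 < M ∧ (∀ x, m * ‖x‖ ≤ Nm x) ∧ (∀ x, Nm x ≤ M * ‖x‖) := by
  classical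
  set M₀ : ℝ := ∑ i : Fin d, Nm (EuclideanSpace.single i (1:ℝ)) with hM₀
  have hM₀nn : 0 ≤ M₀ := Finset.sum_nonneg fun i _ => isnorm_nonneg hNm _
  set M : ℝ := M₀ + 1 with hM
  have hMpos : 0 < M := by positivity
  have hupper : ∀ x : EuclideanSpace ℝ (Fin d), Nm x ≤ M * ‖x‖ := by
    intro x
    have hx := decomp x
    calc Nm x = Nm (∑ i, (x i) • EuclideanSpace.single i (1:ℝ)) := by rw [← hx]
      _ ≤ ∑ i, Nm ((x i) • EuclideanSpace.single i (1:ℝ)) := isnorm_sum hNm _ _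
      _ = ∑ i, |x i| * Nm (EuclideanSpace.single i (1:ℝ)) := by
          simp_rw [hNm.2.1]
      _ ≤ ∑ i, ‖x‖ * Nm (EuclideanSpace.single i (1:ℝ)) := by
          apply Finset.sum_le_sum
          intro i _
          exact mul_le_mul_of_nonneg_right (coord_le_norm x i) (isnorm_nonneg hNm _)
      _ = M₀ * ‖x‖ := by rw [← Finset.mul_sum, mul_comm]
      _ ≤ M * ‖x‖ := by
          apply mul_le_mul_of_nonneg_right _ (norm_nonneg x)
          simp [hM]
  have hcont : Continuous Nm := by
    have : LipschitzWith (Real.toNNReal M) Nm := by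
      apply LipschitzWith.of_dist_le_mul
      intro a b
      rw [Real.dist_eq, dist_eq_norm, Real.coe_toNNReal _ hMpos.le]
      rw [abs_sub_le_iff]
      have key : ∀ u v : EuclideanSpace ℝ (Fin d), Nm u - Nm v ≤ M * ‖u - v‖ := by
        intro u v
        have h1 := hNm.2.2 (u - v) v
        have h2 : u - v + v = u := by abel
        rw [h2] at h1
        have h3 := hupper (u - v)
        linarith
      exact ⟨key a b, (key b a).trans_eq (by rw [norm_sub_rev])⟩
    exact this.continuous
  by_cases hd : ∀ x : EuclideanSpace ℝ (Fin d), x = 0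
  · refine ⟨1, M, one_pos, hMpos, fun x => ?_, hupper⟩
    rw [hd x]
    simp [(hNm.1 0).mpr rfl]
  · push_neg at hd
    obtain ⟨x₀, hx₀⟩ := hd
    have hsne : (Metric.sphere (0 : EuclideanSpace ℝ (Fin d)) 1).Nonempty :=
      ⟨‖x₀‖⁻¹ • x₀, by simp [unit_norm hx₀]⟩
    obtain ⟨z, hz, hmin⟩ :=
      (isCompact_sphere (0 : EuclideanSpace ℝ (Fin d)) 1).exists_isMinOn hsne hcont.continuousOn
    have hznorm : ‖z‖ = 1 := by simpa using hz
    have hzne : z ≠ 0 := by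
      intro h; rw [h] at hznorm; simp at hznorm
    have hmpos : 0 < Nm z := by
      rcases (isnorm_nonneg hNm z).lt_or_eq with h | h
      · exact h
      · exact absurd (((hNm.1 z).mp h.symm)) hzne
    refine ⟨Nm z, M, hmpos, hMpos, fun x => ?_, hupper⟩
    by_cases hx : x = 0
    · simp [hx, (hNm.1 0).mpr rfl]
    · have hu : ‖x‖⁻¹ • x ∈ Metric.sphere (0 : EuclideanSpace ℝ (Fin d)) 1 := by
        simp [unit_norm hx]
      have h1 : Nm z ≤ Nm (‖x‖⁻¹ • x) := hmin hu
      have h2 : Nm x = ‖x‖ * Nm (‖x‖⁻¹ • x) := by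
        have hxx : x = ‖x‖ • (‖x‖⁻¹ • x) := by
          rw [smul_smul, mul_inv_cancel₀ (norm_ne_zero_iff.mpr hx), one_smul]
        nth_rewrite 1 [hxx]
        rw [hNm.2.1, abs_of_nonneg (norm_nonneg x)]
      rw [h2, mul_comm]
      exact mul_le_mul_of_nonneg_left h1 (norm_nonneg x)

lemma isnorm_pos {d : ℕ} {Nm : EuclideanSpace ℝ (Fin d) → ℝ} (hNm : IsNorm Nm)
    {x : EuclideanSpace ℝ (Fin d)} (hx : x ≠ 0) : 0 < Nm x :=
  lt_of_le_of_ne (isnorm_nonneg hNm x) (fun h => hx ((hNm.1 x).mp h.symm))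

lemma isnorm_continuous {d : ℕ} {Nm : EuclideanSpace ℝ (Fin d) → ℝ} (hNm : IsNorm Nm) :
    Continuous Nm := by
  obtain ⟨m, M, hm, hM, hmle, hMle⟩ := norm_equiv hNm
  have : LipschitzWith (Real.toNNReal M) Nm := by
    apply LipschitzWith.of_dist_le_mul
    intro a b
    rw [Real.dist_eq, dist_eq_norm, Real.coe_toNNReal _ hM.le, abs_sub_le_iff]
    have key : ∀ u v : EuclideanSpace ℝ (Fin d), Nm u - Nm v ≤ M * ‖u - v‖ := by
      intro u v
      have h1 := hNm.2.2 (u - v) v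
      have h2 : u - v + v = u := by abel
      rw [h2] at h1
      have h3 := hMle (u - v)
      linarith
    exact ⟨key a b, (key b a).trans_eq (by rw [norm_sub_rev])⟩
  exact this.continuous

lemma key_id {d : ℕ} {Nm : EuclideanSpace ℝ (Fin d) → ℝ} (hNm : IsNorm Nm)
    (f : EuclideanSpace ℝ (Fin d) → ℝ) (w g c : EuclideanSpace ℝ (Fin d)) {ε : ℝ}
    (hε : 0 < ε) (hc : c ≠ 0) :
    (f (w + ε • c) - f w) / ε =
      ((f (w + ε • c) - f w - (inner ℝ g ((w + ε • c) - w) : ℝ)) / Nm ((w + ε • c) - w)) * Nm c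
        + (inner ℝ g c : ℝ) := by
  have h1 : (w + ε • c) - w = ε • c := add_sub_cancel_left w (ε • c)
  rw [h1, hNm.2.1, abs_of_pos hε, real_inner_smul_right]
  have hNc : Nm c ≠ 0 := (isnorm_pos hNm hc).ne'
  have hεne : ε ≠ 0 := hε.ne'
  field_simp
  ring

lemma q_abs_bound {d : ℕ} {Nm : EuclideanSpace ℝ (Fin d) → ℝ} (hNm : IsNorm Nm)
    (f : EuclideanSpace ℝ (Fin d) → ℝ) {L M : ℝ} (hL : 0 ≤ L)
    (hlip : ∀ v u, |f v - f u| ≤ L * Nm (v - u)) (hM : ∀ x, Nm x ≤ M * ‖x‖)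
    (w c : EuclideanSpace ℝ (Fin d)) {ε : ℝ} (hε : 0 < ε) :
    |(f (w + ε • c) - f w) / ε| ≤ L * M * ‖c‖ := by
  have h1 := hlip (w + ε • c) w
  rw [add_sub_cancel_left, hNm.2.1, abs_of_pos hε] at h1
  rw [abs_div, abs_of_pos hε, div_le_iff₀ hε]
  have h2 : Nm c ≤ M * ‖c‖ := hM c
  calc |f (w + ε • c) - f w| ≤ L * (ε * Nm c) := h1
    _ ≤ L * (ε * (M * ‖c‖)) := by
        apply mul_le_mul_of_nonneg_left _ hL
        exact mul_le_mul_of_nonneg_left h2 hε.le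
    _ = L * M * ‖c‖ * ε := by ring

lemma Q_bound {d : ℕ} {Nm : EuclideanSpace ℝ (Fin d) → ℝ} (hNm : IsNorm Nm)
    (f : EuclideanSpace ℝ (Fin d) → ℝ) {L m : ℝ} (hL : 0 ≤ L) (hm : 0 < m)
    (hlip : ∀ v u, |f v - f u| ≤ L * Nm (v - u)) (hmle : ∀ x, m * ‖x‖ ≤ Nm x)
    (w g : EuclideanSpace ℝ (Fin d)) {v : EuclideanSpace ℝ (Fin d)} (hv : v ≠ w) :
    |(f v - f w - (inner ℝ g (v - w) : ℝ)) / Nm (v - w)| ≤ L + ‖g‖ / m := by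
  have hvw : v - w ≠ 0 := sub_ne_zero.mpr hv
  have hNpos : 0 < Nm (v - w) := isnorm_pos hNm hvw
  rw [abs_div, abs_of_pos hNpos, div_le_iff₀ hNpos]
  have hinner : |(inner ℝ g (v - w) : ℝ)| ≤ ‖g‖ * ‖v - w‖ := abs_real_inner_le_norm g (v - w)
  have hnorm : ‖v - w‖ ≤ Nm (v - w) / m := by
    rw [le_div_iff₀ hm]
    calc ‖v - w‖ * m = m * ‖v - w‖ := by ring
      _ ≤ Nm (v - w) := hmle _
  have habs : |f v - f w - (inner ℝ g (v - w) : ℝ)| ≤ |f v - f w| + |(inner ℝ g (v - w) : ℝ)| :=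
    abs_sub _ _
  have hflip := hlip v w
  have hg : 0 ≤ ‖g‖ := norm_nonneg g
  calc |f v - f w - (inner ℝ g (v - w) : ℝ)|
      ≤ |f v - f w| + |(inner ℝ g (v - w) : ℝ)| := habs
    _ ≤ L * Nm (v - w) + ‖g‖ * (Nm (v - w) / m) := by
        apply add_le_add hflip
        exact (hinner.trans (mul_le_mul_of_nonneg_left hnorm hg))
    _ = (L + ‖g‖ / m) * Nm (v - w) := by field_simp

/-- The regular subdifferential of `f` at `w` w.r.t. the norm `Nm`. -/
noncomputable def RegSubdiff {d : ℕ} (Nm : EuclideanSpace ℝ (Fin d) → ℝ)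
    (f : EuclideanSpace ℝ (Fin d) → ℝ) (w : EuclideanSpace ℝ (Fin d)) :
    Set (EuclideanSpace ℝ (Fin d)) :=
  {g | 0 ≤ liminf (fun v => (f v - f w - (inner ℝ g (v - w) : ℝ)) / Nm (v - w))
        (nhdsWithin w {w}ᶜ)}

/-- The lower directional derivative
`f′(w; e) = liminf_{ε → 0⁺, c → e} (f(w + εc) − f(w))/ε`. -/
noncomputable def dirDeriv {d : ℕ} (f : EuclideanSpace ℝ (Fin d) → ℝ)
    (w e : EuclideanSpace ℝ (Fin d)) : ℝ :=
  liminf (fun p : ℝ × EuclideanSpace ℝ (Fin d) => (f (w + p.1 • p.2) - f w) / p.1)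
    (nhdsWithin (0 : ℝ) (Ioi 0) ×ˢ nhds e)

set_option maxHeartbeats 2000000 in
/-- For a Lipschitz function which is subdifferentiable at `w`, the regular subdifferential
is exactly the set of `g` with `⟨g, e⟩ ≤ f′(w; e)` for all directions `e`. -/
theorem stmt_7 (d : ℕ) (Nm : EuclideanSpace ℝ (Fin d) → ℝ) (hNm : IsNorm Nm)
    (f : EuclideanSpace ℝ (Fin d) → ℝ) (L₀ : ℝ)
    (hlip : ∀ v w, |f v - f w| ≤ L₀ * Nm (v - w))
    (w : EuclideanSpace ℝ (Fin d)) (hsub : (RegSubdiff Nm f w).Nonempty) :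
    RegSubdiff Nm f w = {g | ∀ e, (inner ℝ g e : ℝ) ≤ dirDeriv f w e} := by
  classical
  obtain ⟨m, M, hm, hM, hmle, hMle⟩ := norm_equiv hNm
  set L : ℝ := max L₀ 0 with hLdef
  have hL : 0 ≤ L := le_max_right _ _
  have hlip' : ∀ v u, |f v - f u| ≤ L * Nm (v - u) := by
    intro v u
    exact (hlip v u).trans (mul_le_mul_of_nonneg_right (le_max_left _ _) (isnorm_nonneg hNm _))
  set Q : EuclideanSpace ℝ (Fin d) → EuclideanSpace ℝ (Fin d) → ℝ :=
    fun g v => (f v - f w - (inner ℝ g (v - w) : ℝ)) / Nm (v - w) with hQdef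
  set q : ℝ × EuclideanSpace ℝ (Fin d) → ℝ :=
    fun p => (f (w + p.1 • p.2) - f w) / p.1 with hqdef
  have hQbd : ∀ g v, v ≠ w → |Q g v| ≤ L + ‖g‖ / m :=
    fun g v hv => Q_bound hNm f hL hm hlip' hmle w g hv
  have hqbd : ∀ (c : EuclideanSpace ℝ (Fin d)) {ε : ℝ}, 0 < ε → |q (ε, c)| ≤ L * M * ‖c‖ :=
    fun c ε hε => q_abs_bound hNm f hL hlip' hMle w c hε
  have hFev : ∀ᶠ v in nhdsWithin w {w}ᶜ, v ≠ w := eventually_mem_nhdsWithin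
  -- eventual facts on the product filter
  have hev1 : ∀ (e : EuclideanSpace ℝ (Fin d)),
      ∀ᶠ p in nhdsWithin (0:ℝ) (Ioi 0) ×ˢ nhds e, 0 < p.1 :=
    fun e => (eventually_mem_nhdsWithin (a := (0:ℝ)) (s := Ioi 0)).prod_inl _
  have hsnd : ∀ (e : EuclideanSpace ℝ (Fin d)),
      Tendsto Prod.snd (nhdsWithin (0:ℝ) (Ioi 0) ×ˢ nhds e) (nhds e) := fun e => tendsto_snd
  have hev3 : ∀ (e : EuclideanSpace ℝ (Fin d)),
      ∀ᶠ p in nhdsWithin (0:ℝ) (Ioi 0) ×ˢ nhds e, ‖p.2‖ ≤ ‖e‖ + 1 := by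
    intro e
    have := ((hsnd e).norm.eventually_lt_const (lt_add_one ‖e‖))
    exact this.mono fun p hp => hp.le
  have hevq : ∀ (e : EuclideanSpace ℝ (Fin d)),
      ∀ᶠ p in nhdsWithin (0:ℝ) (Ioi 0) ×ˢ nhds e, |q p| ≤ L * M * (‖e‖ + 1) := by
    intro e
    filter_upwards [hev1 e, hev3 e] with p hp1 hp3
    calc |q p| ≤ L * M * ‖p.2‖ := hqbd p.2 hp1
      _ ≤ L * M * (‖e‖ + 1) := by
          apply mul_le_mul_of_nonneg_left hp3
          positivity
  have hQfact : ∀ g, ∀ᶠ v in nhdsWithin w {w}ᶜ, -(L + ‖g‖ / m) ≤ Q g v := by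
    intro g
    filter_upwards [hFev] with v hv
    exact neg_le_of_abs_le (hQbd g v hv)
  ext g
  simp only [RegSubdiff, dirDeriv, mem_setOf_eq]
  constructor
  · -- ⊆
    intro hg e
    by_cases he : e = 0
    · subst he
      rw [inner_zero_right]
      have htend : Tendsto q (nhdsWithin (0:ℝ) (Ioi 0) ×ˢ nhds (0 : EuclideanSpace ℝ (Fin d)))
          (nhds 0) := by
        apply squeeze_zero_norm'
        · filter_upwards [hev1 0] with p hp1
          exact hqbd p.2 hp1
        · have h2 : Tendsto (fun p : ℝ × EuclideanSpace ℝ (Fin d) => ‖p.2‖)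
              (nhdsWithin (0:ℝ) (Ioi 0) ×ˢ nhds (0 : EuclideanSpace ℝ (Fin d))) (nhds 0) := by
            simpa using (hsnd 0).norm
          simpa using h2.const_mul (L * M)
      exact htend.liminf_eq.ge
    · haveI : Nontrivial (EuclideanSpace ℝ (Fin d)) := ⟨e, 0, he⟩
      haveI : NeBot (nhdsWithin w {w}ᶜ) := Module.punctured_nhds_neBot ℝ _ w
      -- tendsto of φ
      have hφ : Tendsto (fun p : ℝ × EuclideanSpace ℝ (Fin d) => w + p.1 • p.2)
          (nhdsWithin (0:ℝ) (Ioi 0) ×ˢ nhds e) (nhdsWithin w {w}ᶜ) := by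
        rw [tendsto_nhdsWithin_iff]
        constructor
        · have hc : Continuous (fun p : ℝ × EuclideanSpace ℝ (Fin d) => w + p.1 • p.2) :=
            continuous_const.add (continuous_fst.smul continuous_snd)
          have h1 : Tendsto (fun p : ℝ × EuclideanSpace ℝ (Fin d) => w + p.1 • p.2)
              (nhds ((0:ℝ), e)) (nhds w) := by
            have := hc.tendsto ((0:ℝ), e)
            simpa using this
          apply h1.mono_left
          rw [nhds_prod_eq]
          exact Filter.prod_mono nhdsWithin_le_nhds le_rfl
        · filter_upwards [hev1 e, (eventually_ne_nhds he).prod_inr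
            (nhdsWithin (0:ℝ) (Ioi 0))] with p hp1 hp2
          simp only [mem_compl_iff, mem_singleton_iff]
          intro hcon
          have : p.1 • p.2 = 0 := by
            have := congrArg (fun x => x - w) hcon
            simpa using this
          exact (smul_ne_zero hp1.ne' hp2) this
      apply le_of_forall_sub_le
      intro ε' hε'
      have hNe1 : (0:ℝ) < Nm e + 1 := by
        have := isnorm_nonneg hNm e; linarith
      set δ : ℝ := ε' / (2 * (Nm e + 1)) with hδdef
      have hδpos : 0 < δ := by positivity
      -- eventually Q (φ p) > -δ
      have hA : ∀ᶠ v in nhdsWithin w {w}ᶜ, -δ < Q g v :=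
        eventually_lt_of_lt_liminf (lt_of_lt_of_le (by linarith) hg)
          ⟨-(L + ‖g‖ / m), hQfact g⟩
      have hA' := hφ.eventually hA
      -- eventually Nm p.2 ≤ Nm e + 1
      have hB : ∀ᶠ p in nhdsWithin (0:ℝ) (Ioi 0) ×ˢ nhds e, Nm p.2 ≤ Nm e + 1 := by
        have h1 : Tendsto (fun p : ℝ × EuclideanSpace ℝ (Fin d) => Nm p.2)
            (nhdsWithin (0:ℝ) (Ioi 0) ×ˢ nhds e) (nhds (Nm e)) :=
          ((isnorm_continuous hNm).tendsto e).comp (hsnd e)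
        exact (h1.eventually_lt_const (lt_add_one (Nm e))).mono fun p hp => hp.le
      -- eventually inner ℝ g p.2 > inner ℝ g e - ε'/2
      have hC : ∀ᶠ p in nhdsWithin (0:ℝ) (Ioi 0) ×ˢ nhds e,
          (inner ℝ g e : ℝ) - ε' / 2 < (inner ℝ g p.2 : ℝ) := by
        have hcont : Continuous (fun c : EuclideanSpace ℝ (Fin d) => (inner ℝ g c : ℝ)) :=
          continuous_const.inner continuous_id
        have h1 : Tendsto (fun p : ℝ × EuclideanSpace ℝ (Fin d) => (inner ℝ g p.2 : ℝ))
            (nhdsWithin (0:ℝ) (Ioi 0) ×ˢ nhds e) (nhds (inner ℝ g e : ℝ)) :=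
          (hcont.tendsto e).comp (hsnd e)
        exact h1.eventually_const_lt (by linarith)
      have hD : ∀ᶠ p in nhdsWithin (0:ℝ) (Ioi 0) ×ˢ nhds e, p.2 ≠ 0 :=
        (eventually_ne_nhds he).prod_inr _
      have hkey : ∀ᶠ p in nhdsWithin (0:ℝ) (Ioi 0) ×ˢ nhds e,
          (inner ℝ g e : ℝ) - ε' ≤ q p := by
        filter_upwards [hA', hB, hC, hD, hev1 e] with p hpA hpB hpC hpD hp1
        have hid := key_id hNm f w g p.2 hp1 hpD
        have hNm2 : 0 ≤ Nm p.2 := isnorm_nonneg hNm _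
        have h1 : -δ * Nm p.2 ≤ Q g (w + p.1 • p.2) * Nm p.2 :=
          mul_le_mul_of_nonneg_right hpA.le hNm2
        have h2 : -δ * (Nm e + 1) ≤ -δ * Nm p.2 := by nlinarith
        have h3 : δ * (Nm e + 1) = ε' / 2 := by
          rw [hδdef]; field_simp
        have : q p = Q g (w + p.1 • p.2) * Nm p.2 + (inner ℝ g p.2 : ℝ) := by
          rw [hqdef, hQdef]
          simpa using hid
        rw [this]
        nlinarith
      exact le_liminf_of_le (isCoboundedUnder_ge_of_eventually_le _
        ((hevq e).mono fun p hp => le_of_abs_le hp)) hkey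
  · -- ⊇
    intro hg
    rcases (nhdsWithin w {w}ᶜ).eq_or_neBot with hbot | hne
    · rw [hbot]
      have : {a : ℝ | ∀ᶠ v in (⊥ : Filter (EuclideanSpace ℝ (Fin d))), a ≤ Q g v} = univ := by
        ext a; simp
      rw [liminf_eq, this, Real.sSup_univ]
    · by_contra hneg
      push_neg at hneg
      set b : ℝ := liminf (fun v => Q g v) (nhdsWithin w {w}ᶜ) / 2 with hbdef
      have hb0 : b < 0 := by
        rw [hbdef]; linarith
      have hlb : liminf (fun v => Q g v) (nhdsWithin w {w}ᶜ) < b := by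
        rw [hbdef]; linarith
      have hfreq : ∃ᶠ v in nhdsWithin w {w}ᶜ, Q g v < b := by
        apply frequently_lt_of_liminf_lt _ hlb
        exact isCoboundedUnder_ge_of_eventually_le _
          (hFev.mono fun v hv => le_of_abs_le (hQbd g v hv))
      obtain ⟨v, hvtend, hvP⟩ := exists_seq_forall_of_frequently (hfreq.and_eventually hFev)
      set ε : ℕ → ℝ := fun n => ‖v n - w‖ with hεdef
      have hεpos : ∀ n, 0 < ε n := fun n => norm_pos_iff.mpr (sub_ne_zero.mpr (hvP n).2)
      set c : ℕ → EuclideanSpace ℝ (Fin d) := fun n => (ε n)⁻¹ • (v n - w) with hcdef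
      have hcsph : ∀ n, c n ∈ Metric.sphere (0 : EuclideanSpace ℝ (Fin d)) 1 := by
        intro n
        simp [hcdef, unit_norm (sub_ne_zero.mpr (hvP n).2), hεdef]
      obtain ⟨e, hesph, φ, hφmono, hce⟩ :=
        (isCompact_sphere (0 : EuclideanSpace ℝ (Fin d)) 1).tendsto_subseq hcsph
      have henorm : ‖e‖ = 1 := by simpa using hesph
      have hene : e ≠ 0 := by intro h; rw [h] at henorm; simp at henorm
      have hNe : 0 < Nm e := isnorm_pos hNm hene
      -- reconstruct v from ε, c
      have hvc : ∀ n, w + ε n • c n = v n := by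
        intro n
        rw [hcdef]
        simp only [smul_smul, mul_inv_cancel₀ (hεpos n).ne', one_smul]
        abel
      -- tendsto of the sequence to the product filter
      have hvφ : Tendsto (fun k => v (φ k)) atTop (nhds w) :=
        (hvtend.comp hφmono.tendsto_atTop).mono_right nhdsWithin_le_nhds
      have hεtend : Tendsto (fun k => ε (φ k)) atTop (nhdsWithin (0:ℝ) (Ioi 0)) := by
        rw [tendsto_nhdsWithin_iff]
        constructor
        · have h0 : Tendsto (fun k => v (φ k) - w) atTop (nhds 0) := by
            have := hvφ.sub (tendsto_const_nhds : Tendsto (fun _ : ℕ => w) atTop (nhds w))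
            simpa using this
          simpa using h0.norm
        · exact Eventually.of_forall fun k => hεpos (φ k)
      have hstend : Tendsto (fun k => (ε (φ k), c (φ k))) atTop
          (nhdsWithin (0:ℝ) (Ioi 0) ×ˢ nhds e) := hεtend.prodMk hce
      -- identity and bound along the sequence
      have hqs : ∀ k, q (ε (φ k), c (φ k)) ≤ b * Nm (c (φ k)) + (inner ℝ g (c (φ k)) : ℝ) := by
        intro k
        have hcne : c (φ k) ≠ 0 := by
          intro h
          have := hcsph (φ k)
          rw [h] at this
          simpa using this
        have hid := key_id hNm f w g (c (φ k)) (hεpos (φ k)) hcne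
        have : q (ε (φ k), c (φ k)) = Q g (v (φ k)) * Nm (c (φ k)) + (inner ℝ g (c (φ k)) : ℝ) := by
          rw [hqdef, hQdef]
          simp only
          rw [hid, hvc (φ k)]
        rw [this]
        have hQlt : Q g (v (φ k)) ≤ b := (hvP (φ k)).1.le
        have hNc : 0 ≤ Nm (c (φ k)) := isnorm_nonneg hNm _
        nlinarith
      have hqsbd : ∀ k, |q (ε (φ k), c (φ k))| ≤ L * M := by
        intro k
        have := hqbd (c (φ k)) (hεpos (φ k))
        have hn : ‖c (φ k)‖ = 1 := by simpa using hcsph (φ k)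
        rwa [hn, mul_one] at this
      -- limit of RHS
      have hRHS : Tendsto (fun k => b * Nm (c (φ k)) + (inner ℝ g (c (φ k)) : ℝ)) atTop
          (nhds (b * Nm e + (inner ℝ g e : ℝ))) := by
        apply Tendsto.add
        · exact (((isnorm_continuous hNm).tendsto e).comp hce).const_mul b
        · exact ((continuous_const.inner continuous_id).tendsto e).comp hce
      -- chain of inequalities
      have hge := hg e
      have h1 : liminf q (nhdsWithin (0:ℝ) (Ioi 0) ×ˢ nhds e) ≤
          liminf (fun k => q (ε (φ k), c (φ k))) atTop := by
        have hmaple : map (fun k => (ε (φ k), c (φ k))) atTop ≤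
            nhdsWithin (0:ℝ) (Ioi 0) ×ˢ nhds e := hstend
        have heq : liminf (fun k => q (ε (φ k), c (φ k))) atTop =
            liminf q (map (fun k => (ε (φ k), c (φ k))) atTop) := by
          rw [Filter.liminf, Filter.liminf, map_map]
          rfl
        rw [heq]
        exact liminf_le_liminf_of_le hmaple
          ⟨-(L * M * (‖e‖ + 1)), (hevq e).mono fun p hp => neg_le_of_abs_le hp⟩
          (isCoboundedUnder_ge_of_eventually_le _
            (eventually_map.mpr (Eventually.of_forall fun k => le_of_abs_le (hqsbd k))))
      have hub : IsBoundedUnder (· ≤ ·) atTop (fun k => q (ε (φ k), c (φ k))) :=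
        ⟨L * M, eventually_map.mpr (Eventually.of_forall fun k => le_of_abs_le (hqsbd k))⟩
      have hlbd : IsBoundedUnder (· ≥ ·) atTop (fun k => q (ε (φ k), c (φ k))) :=
        ⟨-(L * M), eventually_map.mpr (Eventually.of_forall fun k => neg_le_of_abs_le (hqsbd k))⟩
      have h2 : liminf (fun k => q (ε (φ k), c (φ k))) atTop ≤
          limsup (fun k => q (ε (φ k), c (φ k))) atTop :=
        liminf_le_limsup hub hlbd
      have h3 : limsup (fun k => q (ε (φ k), c (φ k))) atTop ≤ b * Nm e + (inner ℝ g e : ℝ) := by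
        have hstep : limsup (fun k => q (ε (φ k), c (φ k))) atTop ≤
            limsup (fun k => b * Nm (c (φ k)) + (inner ℝ g (c (φ k)) : ℝ)) atTop :=
          limsup_le_limsup (Eventually.of_forall hqs) hlbd.isCoboundedUnder_le
            hRHS.isBoundedUnder_le
        rwa [hRHS.limsup_eq] at hstep
      have h4 : b * Nm e < 0 := mul_neg_of_neg_of_pos hb0 hNe
      have hchain := hge.trans (h1.trans (h2.trans h3))
      linarith
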